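/- Cross-term orthogonality for the optimal PPI coefficient: let ∇m(Z) ∈ ℝ^p be square-integrable, ∇m^f(X) ∈ ℝ^p square-integrable with nonsingular covariance, γ ∈ (0,1), and set A* = γ·Cov[∇m(Z), ∇m^f(X)]·Var[∇m^f(X)]^{-1}. Then for every A ∈ ℝ^{p×p}, in the Hilbert space with inner product ⟨(u₁,v₁),(u₂,v₂)⟩ = E[u₁u₂ᵀ] + ((1−γ)/γ)E[v₁v₂ᵀ] applied to pairs (∇m(Z) − A∇m^f(X)-centered, A∇m^f(X)-centered), the cross term ⟨ φ_A − φ_{A*}, φ_{A*}ᵀ ⟩ = 0, where φ_A denotes the pair (−(∇m(Z) − A ∇m^f(X) − E[·]), −A(∇m^f(X) − E[·])). Consequently ⟨φ_A, φ_Aᵀ⟩ ⪰ ⟨φ_{A*}, φ_{A*}ᵀ⟩ for all A. -/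

import Mathlib

open MeasureTheory

/-- Covariance matrix of two vector-valued random variables. -/
noncomputable def covMatrix {Ω : Type*} [MeasurableSpace Ω] (μ : Measure Ω) {p q : ℕ}
    (f : Ω → Fin p → ℝ) (g : Ω → Fin q → ℝ) : Matrix (Fin p) (Fin q) ℝ :=
  Matrix.of fun i j => ∫ ω, (f ω i - ∫ ω', f ω' i ∂μ) * (g ω j - ∫ ω', g ω' j ∂μ) ∂μ

open Matrix

section helpers
variable {Ω : Type*} [MeasurableSpace Ω] {μ : Measure Ω}

lemma l2_mul_integrable {f g : Ω → ℝ} (hf : MemLp f 2 μ) (hg : MemLp g 2 μ) :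
    Integrable (fun ω => f ω * g ω) μ := by
  have := hg.smul (φ := f) hf (r := 1)
  exact memLp_one_iff_integrable.mp this

lemma mulVec_prod_integrable {p q r : ℕ} (f g : Ω → Fin p → ℝ)
    (h : ∀ k l, Integrable (fun ω => f ω k * g ω l) μ)
    (M : Matrix (Fin q) (Fin p) ℝ) (N : Matrix (Fin r) (Fin p) ℝ) (i : Fin q) (j : Fin r) :
    Integrable (fun ω => (M.mulVec (f ω)) i * (N.mulVec (g ω)) j) μ := by
  simp only [Matrix.mulVec, dotProduct]
  have : (fun ω => (∑ k, M i k * f ω k) * (∑ l, N j l * g ω l))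
      = fun ω => ∑ k, ∑ l, (M i k * N j l) * (f ω k * g ω l) := by
    funext ω
    rw [Finset.sum_mul_sum]
    congr 1; funext k; congr 1; funext l; ring
  rw [this]
  exact integrable_finset_sum _ fun k _ => integrable_finset_sum _ fun l _ =>
    (h k l).const_mul _

lemma dot_integral {p q r : ℕ} (f g : Ω → Fin p → ℝ)
    (h : ∀ k l, Integrable (fun ω => f ω k * g ω l) μ)
    (M : Matrix (Fin q) (Fin p) ℝ) (N : Matrix (Fin r) (Fin p) ℝ) (i : Fin q) (j : Fin r) :
    ∫ ω, (M.mulVec (f ω)) i * (N.mulVec (g ω)) j ∂μ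
      = (M * (Matrix.of (fun k l => ∫ ω, f ω k * g ω l ∂μ)) * Nᵀ) i j := by
  simp only [Matrix.mulVec, dotProduct]
  have e : (fun ω => (∑ k, M i k * f ω k) * (∑ l, N j l * g ω l))
      = fun ω => ∑ k, ∑ l, (M i k * N j l) * (f ω k * g ω l) := by
    funext ω
    rw [Finset.sum_mul_sum]
    congr 1; funext k; congr 1; funext l; ring
  rw [e, integral_finset_sum _ (fun k _ => integrable_finset_sum _ fun l _ => (h k l).const_mul _)]
  have e2 : ∀ k, ∫ ω, ∑ l, (M i k * N j l) * (f ω k * g ω l) ∂μ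
      = ∑ l, (M i k * N j l) * ∫ ω, f ω k * g ω l ∂μ := by
    intro k
    rw [integral_finset_sum _ (fun l _ => (h k l).const_mul _)]
    exact Finset.sum_congr rfl fun l _ => integral_const_mul _ _
  simp only [e2, Matrix.mul_apply, Matrix.transpose_apply, Matrix.of_apply, Finset.sum_mul]
  rw [Finset.sum_comm]
  congr 1; funext l; congr 1; funext k; ring

lemma expand_integral {p : ℕ} (f g : Ω → Fin p → ℝ)
    (hff : ∀ k l, Integrable (fun ω => f ω k * f ω l) μ)
    (hfg : ∀ k l, Integrable (fun ω => f ω k * g ω l) μ)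
    (hgf : ∀ k l, Integrable (fun ω => g ω k * f ω l) μ)
    (hgg : ∀ k l, Integrable (fun ω => g ω k * g ω l) μ)
    (M₁ N₁ M₂ N₂ : Matrix (Fin p) (Fin p) ℝ) (i j : Fin p) :
    ∫ ω, (M₁.mulVec (f ω) + N₁.mulVec (g ω)) i * (M₂.mulVec (f ω) + N₂.mulVec (g ω)) j ∂μ
      = (M₁ * (Matrix.of (fun k l => ∫ ω, f ω k * f ω l ∂μ)) * M₂ᵀ
        + M₁ * (Matrix.of (fun k l => ∫ ω, f ω k * g ω l ∂μ)) * N₂ᵀ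
        + N₁ * (Matrix.of (fun k l => ∫ ω, g ω k * f ω l ∂μ)) * M₂ᵀ
        + N₁ * (Matrix.of (fun k l => ∫ ω, g ω k * g ω l ∂μ)) * N₂ᵀ) i j := by
  have I1 := mulVec_prod_integrable f f hff M₁ M₂ i j
  have I2 := mulVec_prod_integrable f g hfg M₁ N₂ i j
  have I3 := mulVec_prod_integrable g f hgf N₁ M₂ i j
  have I4 := mulVec_prod_integrable g g hgg N₁ N₂ i j
  have e : (fun ω => (M₁.mulVec (f ω) + N₁.mulVec (g ω)) i * (M₂.mulVec (f ω) + N₂.mulVec (g ω)) j)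
      = fun ω => (M₁.mulVec (f ω)) i * (M₂.mulVec (f ω)) j
          + (M₁.mulVec (f ω)) i * (N₂.mulVec (g ω)) j
          + (N₁.mulVec (g ω)) i * (M₂.mulVec (f ω)) j
          + (N₁.mulVec (g ω)) i * (N₂.mulVec (g ω)) j := by
    funext ω; simp only [Pi.add_apply]; ring
  have I12 : Integrable (fun ω => (M₁.mulVec (f ω)) i * (M₂.mulVec (f ω)) j
      + (M₁.mulVec (f ω)) i * (N₂.mulVec (g ω)) j) μ := I1.add I2
  have I123 : Integrable (fun ω => (M₁.mulVec (f ω)) i * (M₂.mulVec (f ω)) j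
      + (M₁.mulVec (f ω)) i * (N₂.mulVec (g ω)) j
      + (N₁.mulVec (g ω)) i * (M₂.mulVec (f ω)) j) μ := I12.add I3
  rw [e, integral_add I123 I4, integral_add I12 I3, integral_add I1 I2,
    dot_integral f f hff M₁ M₂ i j, dot_integral f g hfg M₁ N₂ i j,
    dot_integral g f hgf N₁ M₂ i j, dot_integral g g hgg N₁ N₂ i j]
  simp [Matrix.add_apply]

end helpers

/-- Cross-term orthogonality for the optimal PPI coefficient
`A* = γ Cov[∇m, ∇m^f] Var[∇m^f]⁻¹`: for every `A`, the `H`-cross term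
`⟨φ_A − φ_{A*}, φ_{A*}ᵀ⟩_H` vanishes, hence `⟨φ_A, φ_Aᵀ⟩_H ⪰ ⟨φ_{A*}, φ_{A*}ᵀ⟩_H`. -/
theorem stmt_10 {Ω : Type*} [MeasurableSpace Ω]
    (μ : Measure Ω) [IsProbabilityMeasure μ]
    (γ : ℝ) (hγ0 : 0 < γ) (hγ1 : γ < 1) {p : ℕ}
    (u v : Ω → Fin p → ℝ)
    (hu : ∀ i, MemLp (fun ω => u ω i) 2 μ)
    (hv : ∀ i, MemLp (fun ω => v ω i) 2 μ)
    (hnonsing : IsUnit (covMatrix μ v v).det)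
    (u0 v0 : Ω → Fin p → ℝ)
    (hu0 : u0 = fun ω => u ω - fun i => ∫ ω', u ω' i ∂μ)
    (hv0 : v0 = fun ω => v ω - fun i => ∫ ω', v ω' i ∂μ)
    (Astar : Matrix (Fin p) (Fin p) ℝ)
    (hAstar : Astar = γ • (covMatrix μ u v * (covMatrix μ v v)⁻¹))
    (a b : Matrix (Fin p) (Fin p) ℝ → Ω → Fin p → ℝ)
    (ha : a = fun A ω => -(u0 ω - A.mulVec (v0 ω)))
    (hb : b = fun A ω => -(A.mulVec (v0 ω)))
    (Hp : (Ω → Fin p → ℝ) → (Ω → Fin p → ℝ) → (Ω → Fin p → ℝ) → (Ω → Fin p → ℝ) →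
      Matrix (Fin p) (Fin p) ℝ)
    (hHp : Hp = fun a₁ b₁ a₂ b₂ => Matrix.of fun i j =>
      (∫ ω, a₁ ω i * a₂ ω j ∂μ) + ((1 - γ) / γ) * ∫ ω, b₁ ω i * b₂ ω j ∂μ) :
    ∀ A : Matrix (Fin p) (Fin p) ℝ,
      Hp (fun ω => a A ω - a Astar ω) (fun ω => b A ω - b Astar ω) (a Astar) (b Astar) = 0 ∧
      (Hp (a A) (b A) (a A) (b A) - Hp (a Astar) (b Astar) (a Astar) (b Astar)).PosSemidef := by
  intro A
  have hγ : γ ≠ 0 := ne_of_gt hγ0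
  -- centered variables are L²
  have hu0m : ∀ i, MemLp (fun ω => u0 ω i) 2 μ := by
    intro i
    have e : (fun ω => u0 ω i) = fun ω => u ω i - ∫ ω', u ω' i ∂μ := by
      funext ω; rw [hu0]; rfl
    rw [e]; exact (hu i).sub (memLp_const _)
  have hv0m : ∀ i, MemLp (fun ω => v0 ω i) 2 μ := by
    intro i
    have e : (fun ω => v0 ω i) = fun ω => v ω i - ∫ ω', v ω' i ∂μ := by
      funext ω; rw [hv0]; rfl
    rw [e]; exact (hv i).sub (memLp_const _)
  have huu : ∀ k l, Integrable (fun ω => u0 ω k * u0 ω l) μ :=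
    fun k l => l2_mul_integrable (hu0m k) (hu0m l)
  have huv : ∀ k l, Integrable (fun ω => u0 ω k * v0 ω l) μ :=
    fun k l => l2_mul_integrable (hu0m k) (hv0m l)
  have hvu : ∀ k l, Integrable (fun ω => v0 ω k * u0 ω l) μ :=
    fun k l => l2_mul_integrable (hv0m k) (hu0m l)
  have hvv : ∀ k l, Integrable (fun ω => v0 ω k * v0 ω l) μ :=
    fun k l => l2_mul_integrable (hv0m k) (hv0m l)
  -- moment matrices
  obtain ⟨Suu, hSuu⟩ : ∃ M : Matrix (Fin p) (Fin p) ℝ,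
      M = Matrix.of (fun k l => ∫ ω, u0 ω k * u0 ω l ∂μ) := ⟨_, rfl⟩
  obtain ⟨Suv, hSuv⟩ : ∃ M : Matrix (Fin p) (Fin p) ℝ,
      M = Matrix.of (fun k l => ∫ ω, u0 ω k * v0 ω l ∂μ) := ⟨_, rfl⟩
  obtain ⟨Svu, hSvu⟩ : ∃ M : Matrix (Fin p) (Fin p) ℝ,
      M = Matrix.of (fun k l => ∫ ω, v0 ω k * u0 ω l ∂μ) := ⟨_, rfl⟩
  obtain ⟨Svv, hSvv⟩ : ∃ M : Matrix (Fin p) (Fin p) ℝ,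
      M = Matrix.of (fun k l => ∫ ω, v0 ω k * v0 ω l ∂μ) := ⟨_, rfl⟩
  -- identification with covariance matrices
  have hcovuv : covMatrix μ u v = Suv := by
    ext i j
    rw [hSuv]
    simp only [covMatrix, Matrix.of_apply]
    refine integral_congr_ae (Filter.Eventually.of_forall fun ω => ?_)
    rw [hu0, hv0]; rfl
  have hcovvv : covMatrix μ v v = Svv := by
    ext i j
    rw [hSvv]
    simp only [covMatrix, Matrix.of_apply]
    refine integral_congr_ae (Filter.Eventually.of_forall fun ω => ?_)
    rw [hv0]; rfl
  have hnons' : IsUnit Svv.det := by rwa [hcovvv] at hnonsing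
  -- symmetry facts
  have hSvvsym : ∀ i j, Svv i j = Svv j i := by
    intro i j
    rw [hSvv]
    simp only [Matrix.of_apply]
    exact integral_congr_ae (Filter.Eventually.of_forall fun ω => mul_comm _ _)
  have hSvvT : Svvᵀ = Svv := by
    ext i j; rw [Matrix.transpose_apply]; exact hSvvsym j i
  have hSuvT : Suvᵀ = Svu := by
    ext i j
    rw [Matrix.transpose_apply, hSuv, hSvu]
    simp only [Matrix.of_apply]
    exact integral_congr_ae (Filter.Eventually.of_forall fun ω => mul_comm _ _)
  have hinvT : (Svv⁻¹)ᵀ = Svv⁻¹ := by rw [Matrix.transpose_nonsing_inv, hSvvT]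
  -- identities for A*
  have hAS : Astar * Svv = γ • Suv := by
    rw [hAstar, hcovuv, hcovvv, Matrix.smul_mul, Matrix.mul_assoc,
      Matrix.nonsing_inv_mul _ hnons', Matrix.mul_one]
  have hSA : Svv * Astarᵀ = γ • Svu := by
    have h := congrArg Matrix.transpose hAS
    rw [Matrix.transpose_mul, hSvvT, Matrix.transpose_smul, hSuvT] at h
    exact h
  have hsymA : Astar * Svu = Suv * Astarᵀ := by
    rw [hAstar, hcovuv, hcovvv, Matrix.transpose_smul, Matrix.transpose_mul, hinvT, hSuvT,
      Matrix.mul_smul, Matrix.smul_mul, Matrix.mul_assoc]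
  -- scalar arithmetic
  have hcγ : ((1 - γ) / γ) * γ = 1 - γ := by field_simp
  have h1cγ : (1 + (1 - γ) / γ) * γ = 1 := by field_simp; ring
  have hc0 : (0:ℝ) ≤ 1 + (1 - γ) / γ := by
    have : 0 < (1 - γ) / γ := div_pos (by linarith) hγ0
    linarith
  -- the key expansion of H-entries
  have key : ∀ (M₁ N₁ M₂ N₂ M₃ N₃ M₄ N₄ : Matrix (Fin p) (Fin p) ℝ) (i j : Fin p),
      (∫ ω, (M₁.mulVec (u0 ω) + N₁.mulVec (v0 ω)) i * (M₃.mulVec (u0 ω) + N₃.mulVec (v0 ω)) j ∂μ)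
        + ((1 - γ) / γ) *
          ∫ ω, (M₂.mulVec (u0 ω) + N₂.mulVec (v0 ω)) i * (M₄.mulVec (u0 ω) + N₄.mulVec (v0 ω)) j ∂μ
      = ((M₁ * Suu * M₃ᵀ + M₁ * Suv * N₃ᵀ + N₁ * Svu * M₃ᵀ + N₁ * Svv * N₃ᵀ)
        + ((1 - γ) / γ) • (M₂ * Suu * M₄ᵀ + M₂ * Suv * N₄ᵀ + N₂ * Svu * M₄ᵀ + N₂ * Svv * N₄ᵀ)) i j := by
    intro M₁ N₁ M₂ N₂ M₃ N₃ M₄ N₄ i j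
    rw [expand_integral u0 v0 huu huv hvu hvv M₁ N₁ M₃ N₃ i j,
      expand_integral u0 v0 huu huv hvu hvv M₂ N₂ M₄ N₄ i j,
      ← hSuu, ← hSuv, ← hSvu, ← hSvv]
    simp only [Matrix.add_apply, Matrix.smul_apply, smul_eq_mul]
  -- useful scalar-collapse rewrites
  have hrw : ∀ Z : Matrix (Fin p) (Fin p) ℝ, ((1 - γ) / γ) • (γ • Z) = (1 - γ) • Z := by
    intro Z; rw [smul_smul, hcγ]
  have hrw2 : ∀ Z : Matrix (Fin p) (Fin p) ℝ, (1 + (1 - γ) / γ) • (γ • Z) = Z := by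
    intro Z; rw [smul_smul, h1cγ, one_smul]
  constructor
  · -- cross term vanishes
    have hcross0 :
        ((0 * Suu * (-1:Matrix (Fin p) (Fin p) ℝ)ᵀ + 0 * Suv * Astarᵀ
            + (A - Astar) * Svu * (-1:Matrix (Fin p) (Fin p) ℝ)ᵀ + (A - Astar) * Svv * Astarᵀ)
          + ((1 - γ) / γ) • ((0:Matrix (Fin p) (Fin p) ℝ) * Suu * (0:Matrix (Fin p) (Fin p) ℝ)ᵀ
            + 0 * Suv * (-Astar)ᵀ + (Astar - A) * Svu * (0:Matrix (Fin p) (Fin p) ℝ)ᵀ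
            + (Astar - A) * Svv * (-Astar)ᵀ)) = 0 := by
      simp only [Matrix.zero_mul, Matrix.mul_zero, zero_add, add_zero, Matrix.transpose_neg,
        Matrix.transpose_one, Matrix.transpose_zero, Matrix.mul_neg, Matrix.neg_mul,
        Matrix.mul_one, neg_neg, neg_zero]
      rw [Matrix.mul_assoc (A - Astar) Svv, Matrix.mul_assoc (Astar - A) Svv, hSA,
        Matrix.mul_smul, Matrix.mul_smul, Matrix.sub_mul A Astar Svu,
        Matrix.sub_mul Astar A Svu]
      rw [smul_neg, hrw]
      module
    simp only [hHp, ha, hb]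
    ext i j
    simp only [Matrix.of_apply]
    rw [show (∫ ω, (-(u0 ω - A.mulVec (v0 ω)) - -(u0 ω - Astar.mulVec (v0 ω))) i
            * (-(u0 ω - Astar.mulVec (v0 ω))) j ∂μ)
        = ∫ ω, ((0:Matrix (Fin p) (Fin p) ℝ).mulVec (u0 ω) + (A - Astar).mulVec (v0 ω)) i
            * ((-1:Matrix (Fin p) (Fin p) ℝ).mulVec (u0 ω) + Astar.mulVec (v0 ω)) j ∂μ from
        integral_congr_ae (Filter.Eventually.of_forall fun ω => by
          simp only [Matrix.sub_mulVec, Matrix.neg_mulVec, Matrix.zero_mulVec,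
            Matrix.one_mulVec, Pi.add_apply, Pi.sub_apply, Pi.neg_apply, Pi.zero_apply]
          ring)]
    rw [show (∫ ω, (-(A.mulVec (v0 ω)) - -(Astar.mulVec (v0 ω))) i
            * (-(Astar.mulVec (v0 ω))) j ∂μ)
        = ∫ ω, ((0:Matrix (Fin p) (Fin p) ℝ).mulVec (u0 ω) + (Astar - A).mulVec (v0 ω)) i
            * ((0:Matrix (Fin p) (Fin p) ℝ).mulVec (u0 ω) + (-Astar).mulVec (v0 ω)) j ∂μ from
        integral_congr_ae (Filter.Eventually.of_forall fun ω => by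
          simp only [Matrix.sub_mulVec, Matrix.neg_mulVec, Matrix.zero_mulVec,
            Pi.add_apply, Pi.sub_apply, Pi.neg_apply, Pi.zero_apply]
          ring)]
    rw [key 0 (A - Astar) 0 (Astar - A) (-1) Astar 0 (-Astar) i j, hcross0]
  · -- difference is positive semidefinite
    have hdm :
        (((-1:Matrix (Fin p) (Fin p) ℝ) * Suu * (-1:Matrix (Fin p) (Fin p) ℝ)ᵀ
            + (-1:Matrix (Fin p) (Fin p) ℝ) * Suv * Aᵀ + A * Svu * (-1:Matrix (Fin p) (Fin p) ℝ)ᵀ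
            + A * Svv * Aᵀ)
          + ((1 - γ) / γ) • ((0:Matrix (Fin p) (Fin p) ℝ) * Suu * (0:Matrix (Fin p) (Fin p) ℝ)ᵀ
            + 0 * Suv * (-A)ᵀ + (-A) * Svu * (0:Matrix (Fin p) (Fin p) ℝ)ᵀ + (-A) * Svv * (-A)ᵀ))
        - (((-1:Matrix (Fin p) (Fin p) ℝ) * Suu * (-1:Matrix (Fin p) (Fin p) ℝ)ᵀ
            + (-1:Matrix (Fin p) (Fin p) ℝ) * Suv * Astarᵀ
            + Astar * Svu * (-1:Matrix (Fin p) (Fin p) ℝ)ᵀ + Astar * Svv * Astarᵀ)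
          + ((1 - γ) / γ) • ((0:Matrix (Fin p) (Fin p) ℝ) * Suu * (0:Matrix (Fin p) (Fin p) ℝ)ᵀ
            + 0 * Suv * (-Astar)ᵀ + (-Astar) * Svu * (0:Matrix (Fin p) (Fin p) ℝ)ᵀ
            + (-Astar) * Svv * (-Astar)ᵀ))
        = (A - Astar) * ((1 + (1 - γ) / γ) • Svv) * (A - Astar)ᵀ := by
      have k1 : A * Svv * Astarᵀ = γ • (A * Svu) := by
        rw [Matrix.mul_assoc, hSA, Matrix.mul_smul]
      have k2 : Astar * Svv * Aᵀ = γ • (Suv * Aᵀ) := by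
        rw [hAS, Matrix.smul_mul]
      have k3 : Astar * Svv * Astarᵀ = γ • (Suv * Astarᵀ) := by
        rw [hAS, Matrix.smul_mul]
      simp only [Matrix.zero_mul, Matrix.mul_zero, zero_add, add_zero, Matrix.transpose_neg,
        Matrix.transpose_one, Matrix.transpose_zero, Matrix.mul_neg, Matrix.neg_mul,
        Matrix.mul_one, Matrix.one_mul, neg_neg, neg_zero]
      conv_rhs => rw [Matrix.mul_smul, Matrix.smul_mul, Matrix.transpose_sub,
        Matrix.sub_mul A Astar Svv, Matrix.sub_mul (A * Svv) (Astar * Svv),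
        Matrix.mul_sub (A * Svv), Matrix.mul_sub (Astar * Svv)]
      rw [k1, k2, k3, hsymA]
      simp only [smul_sub, hrw2, hrw]
      module
    have hdiff : Hp (a A) (b A) (a A) (b A) - Hp (a Astar) (b Astar) (a Astar) (b Astar)
        = (A - Astar) * ((1 + (1 - γ) / γ) • Svv) * (A - Astar)ᵀ := by
      simp only [hHp, ha, hb]
      ext i j
      simp only [Matrix.sub_apply, Matrix.of_apply]
      rw [show (∫ ω, (-(u0 ω - A.mulVec (v0 ω))) i * (-(u0 ω - A.mulVec (v0 ω))) j ∂μ)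
          = ∫ ω, ((-1:Matrix (Fin p) (Fin p) ℝ).mulVec (u0 ω) + A.mulVec (v0 ω)) i
              * ((-1:Matrix (Fin p) (Fin p) ℝ).mulVec (u0 ω) + A.mulVec (v0 ω)) j ∂μ from
          integral_congr_ae (Filter.Eventually.of_forall fun ω => by
            simp only [Matrix.neg_mulVec, Matrix.one_mulVec, Pi.add_apply, Pi.sub_apply,
              Pi.neg_apply]
            ring)]
      rw [show (∫ ω, (-(A.mulVec (v0 ω))) i * (-(A.mulVec (v0 ω))) j ∂μ)
          = ∫ ω, ((0:Matrix (Fin p) (Fin p) ℝ).mulVec (u0 ω) + (-A).mulVec (v0 ω)) i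
              * ((0:Matrix (Fin p) (Fin p) ℝ).mulVec (u0 ω) + (-A).mulVec (v0 ω)) j ∂μ from
          integral_congr_ae (Filter.Eventually.of_forall fun ω => by
            simp only [Matrix.neg_mulVec, Matrix.zero_mulVec, Pi.add_apply, Pi.neg_apply,
              Pi.zero_apply]
            ring)]
      rw [show (∫ ω, (-(u0 ω - Astar.mulVec (v0 ω))) i * (-(u0 ω - Astar.mulVec (v0 ω))) j ∂μ)
          = ∫ ω, ((-1:Matrix (Fin p) (Fin p) ℝ).mulVec (u0 ω) + Astar.mulVec (v0 ω)) i
              * ((-1:Matrix (Fin p) (Fin p) ℝ).mulVec (u0 ω) + Astar.mulVec (v0 ω)) j ∂μ from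
          integral_congr_ae (Filter.Eventually.of_forall fun ω => by
            simp only [Matrix.neg_mulVec, Matrix.one_mulVec, Pi.add_apply, Pi.sub_apply,
              Pi.neg_apply]
            ring)]
      rw [show (∫ ω, (-(Astar.mulVec (v0 ω))) i * (-(Astar.mulVec (v0 ω))) j ∂μ)
          = ∫ ω, ((0:Matrix (Fin p) (Fin p) ℝ).mulVec (u0 ω) + (-Astar).mulVec (v0 ω)) i
              * ((0:Matrix (Fin p) (Fin p) ℝ).mulVec (u0 ω) + (-Astar).mulVec (v0 ω)) j ∂μ from
          integral_congr_ae (Filter.Eventually.of_forall fun ω => by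
            simp only [Matrix.neg_mulVec, Matrix.zero_mulVec, Pi.add_apply, Pi.neg_apply,
              Pi.zero_apply]
            ring)]
      rw [key (-1) A 0 (-A) (-1) A 0 (-A) i j,
        key (-1) Astar 0 (-Astar) (-1) Astar 0 (-Astar) i j]
      have := congrArg (fun M : Matrix (Fin p) (Fin p) ℝ => M i j) hdm
      simpa [Matrix.sub_apply] using this
    rw [hdiff]
    -- positive semidefiniteness
    have hquad : ∀ x : Fin p → ℝ, 0 ≤ dotProduct x (Svv.mulVec x) := by
      intro x
      obtain ⟨X, hX⟩ : ∃ M : Matrix (Fin 1) (Fin p) ℝ, M = Matrix.of (fun _ k => x k) := ⟨_, rfl⟩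
      have h1 := dot_integral (μ := μ) v0 v0 hvv X X 0 0
      rw [← hSvv] at h1
      have h2 : dotProduct x (Svv.mulVec x) = (X * Svv * Xᵀ) 0 0 := by
        simp only [Matrix.mul_apply, Matrix.mulVec, dotProduct, Matrix.transpose_apply,
          hX, Matrix.of_apply, Finset.sum_mul, Finset.mul_sum]
        rw [Finset.sum_comm]
        exact Finset.sum_congr rfl fun k _ => Finset.sum_congr rfl fun l _ => by ring
      rw [h2, ← h1]
      exact integral_nonneg fun ω => mul_self_nonneg _
    have hpsd : ((1 + (1 - γ) / γ) • Svv).PosSemidef := by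
      rw [Matrix.posSemidef_iff_dotProduct_mulVec]
      constructor
      · ext i j
        rw [Matrix.conjTranspose_apply, Matrix.smul_apply, Matrix.smul_apply]
        rw [star_trivial]
        rw [hSvvsym j i]
      · intro x
        have hx : star x = x := funext fun k => star_trivial _
        rw [hx, Matrix.smul_mulVec, dotProduct_smul, smul_eq_mul]
        exact mul_nonneg hc0 (hquad x)
    have := hpsd.mul_mul_conjTranspose_same (A - Astar)
    rwa [Matrix.conjTranspose_eq_transpose_of_trivial] at this
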